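/- Let C' = Proj(k[t,a][x,y,z]/(zy² − x³ − z²x − z³)) and let C = Bl_{(t,x,z)} C' be the blow-up along the ideal (t,x,z). Then the rational map [t³y : at²x : z] : C' ⇢ ℙ² extends to a morphism f : C → ℙ², i.e., the inverse image ideal sheaf of (t³y, at²x, z) on C is invertible. -/

import Mathlib

open MvPolynomial

lemma primeX (k : Type*) [Field k] (i : Fin 4) : Prime (X i : MvPolynomial (Fin 4) k) := by
  have h0 : Prime (X 0 : MvPolynomial (Fin 4) k) := by
    rw [← MulEquiv.prime_iff (finSuccEquiv k 3).toMulEquiv]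
    simpa [finSuccEquiv_X_zero] using
      (Polynomial.prime_X : Prime (Polynomial.X : Polynomial (MvPolynomial (Fin 3) k)))
  rw [← MulEquiv.prime_iff (renameEquiv k (Equiv.swap i (0 : Fin 4))).toMulEquiv]
  simpa using h0

lemma quot_nzd {R : Type*} [CommRing R] [IsDomain R] {π g : R} (hπ : Prime π) (hg : ¬ π ∣ g)
    (n : ℕ) : (Ideal.Quotient.mk (Ideal.span {g})) π ^ n ∈ nonZeroDivisors _ := by
  rw [mem_nonZeroDivisors_iff_right]
  intro x hx
  obtain ⟨p, rfl⟩ := Ideal.Quotient.mk_surjective x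
  rw [← map_pow, ← map_mul, Ideal.Quotient.eq_zero_iff_mem, Ideal.mem_span_singleton] at hx
  obtain ⟨q, hq⟩ := hx
  obtain ⟨q', rfl⟩ := hπ.pow_dvd_of_dvd_mul_left n hg ⟨p, by rw [← hq]; ring⟩
  rw [Ideal.Quotient.eq_zero_iff_mem, Ideal.mem_span_singleton]
  refine ⟨q', mul_right_cancel₀ (pow_ne_zero n hπ.ne_zero) ?_⟩
  rw [hq]; ring

lemma notdvd_g1 (k : Type*) [Field k] :
    ¬ (X 0 : MvPolynomial (Fin 4) k) ∣
      (X 3 - X 0 ^ 2 * ((X 2) ^ 3 + (X 3) ^ 2 * X 2 + (X 3) ^ 3)) := by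
  rintro ⟨c, hc⟩
  have := congrArg (eval (fun j : Fin 4 => if j = 3 then (1 : k) else 0)) hc
  simp at this

lemma notdvd_g2 (k : Type*) [Field k] :
    ¬ (X 2 : MvPolynomial (Fin 4) k) ∣
      (X 3 - X 2 ^ 2 * (1 + (X 3) ^ 2 + (X 3) ^ 3)) := by
  rintro ⟨c, hc⟩
  have := congrArg (eval (fun j : Fin 4 => if j = 3 then (1 : k) else 0)) hc
  simp at this

set_option maxHeartbeats 1000000 in
set_option synthInstance.maxHeartbeats 200000 in
/-- On the blow-up C = Bl_{(t,x,z)} C' of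
C' = Proj(k[t,a][x,y,z]/(zy² − x³ − z²x − z³)), the rational map [t³y : at²x : z]
extends to a morphism C → ℙ²: the inverse image ideal of (t³y, at²x, z) is invertible.
Concretely, near the indeterminacy point (which lies in the affine chart y = 1, where
the curve is z = x³ + z²x + z³), on each of the three standard charts of the blow-up of
the ideal (t, x, z) the inverse image ideal is principal, generated by a non-zero-divisor.
Chart variables are indexed by Fin 4.  t-chart (x = t·x₁, z = t·z₁, vars t,a,x₁,z₁):
the ideal (t³, at³x₁, tz₁) equals (t³).  x-chart (t = x·t₁, z = x·z₁, vars t₁,a,x,z₁):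
the ideal (x³t₁³, ax³t₁², xz₁) equals (x³).  z-chart (t = z·t₁, x = z·x₁, vars
t₁,a,x₁,z): the ideal (z³t₁³, az³t₁²x₁, z) is the unit ideal. -/
theorem stmt2 (k : Type*) [Field k] [IsAlgClosed k] :
    -- t-chart: ring k[t,a,x₁,z₁]/(z₁ − t²(x₁³ + z₁²x₁ + z₁³))
    (let I₁ : Ideal (MvPolynomial (Fin 4) k) :=
        Ideal.span {X 3 - X 0 ^ 2 * ((X 2) ^ 3 + (X 3) ^ 2 * X 2 + (X 3) ^ 3)}
     let ψ := Ideal.Quotient.mk I₁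
     Ideal.span {ψ (X 0) ^ 3, ψ (X 1) * ψ (X 0) ^ 3 * ψ (X 2), ψ (X 0) * ψ (X 3)} =
        Ideal.span {ψ (X 0) ^ 3} ∧ ψ (X 0) ^ 3 ∈ nonZeroDivisors _) ∧
    -- x-chart: ring k[t₁,a,x,z₁]/(z₁ − x²(1 + z₁² + z₁³))
    (let I₂ : Ideal (MvPolynomial (Fin 4) k) :=
        Ideal.span {X 3 - X 2 ^ 2 * (1 + (X 3) ^ 2 + (X 3) ^ 3)}
     let ψ := Ideal.Quotient.mk I₂
     Ideal.span {ψ (X 2) ^ 3 * ψ (X 0) ^ 3, ψ (X 1) * ψ (X 2) ^ 3 * ψ (X 0) ^ 2,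
          ψ (X 2) * ψ (X 3)} = Ideal.span {ψ (X 2) ^ 3} ∧
        ψ (X 2) ^ 3 ∈ nonZeroDivisors _) ∧
    -- z-chart: ring k[t₁,a,x₁,z]/(1 − z²(x₁³ + x₁ + 1))
    (let I₃ : Ideal (MvPolynomial (Fin 4) k) :=
        Ideal.span {1 - X 3 ^ 2 * ((X 2) ^ 3 + X 2 + 1)}
     let ψ := Ideal.Quotient.mk I₃
     Ideal.span {ψ (X 3) ^ 3 * ψ (X 0) ^ 3, ψ (X 1) * ψ (X 3) ^ 3 * ψ (X 0) ^ 2 * ψ (X 2),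
          ψ (X 3)} = ⊤) := by
  refine ⟨?_, ?_, ?_⟩
  · intro I₁ ψ
    constructor
    · apply le_antisymm
      · rw [Ideal.span_le]
        rintro r hr
        simp only [Set.mem_insert_iff, Set.mem_singleton_iff] at hr
        rcases hr with rfl | rfl | rfl
        · exact Ideal.subset_span rfl
        · exact Ideal.mem_span_singleton.mpr ⟨ψ (X 1) * ψ (X 2), by ring⟩
        · refine Ideal.mem_span_singleton.mpr
            ⟨ψ ((X 2) ^ 3 + (X 3) ^ 2 * X 2 + (X 3) ^ 3), ?_⟩
          rw [← map_mul, ← map_pow, ← map_mul]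
          exact Ideal.Quotient.eq.mpr (Ideal.mem_span_singleton.mpr ⟨X 0, by ring⟩)
      · rw [Ideal.span_singleton_le_iff_mem]
        exact Ideal.subset_span (Set.mem_insert _ _)
    · exact quot_nzd (primeX k 0) (notdvd_g1 k) 3
  · intro I₂ ψ
    constructor
    · apply le_antisymm
      · rw [Ideal.span_le]
        rintro r hr
        simp only [Set.mem_insert_iff, Set.mem_singleton_iff] at hr
        rcases hr with rfl | rfl | rfl
        · exact Ideal.mem_span_singleton.mpr ⟨ψ (X 0) ^ 3, by ring⟩
        · exact Ideal.mem_span_singleton.mpr ⟨ψ (X 1) * ψ (X 0) ^ 2, by ring⟩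
        · refine Ideal.mem_span_singleton.mpr ⟨ψ (1 + (X 3) ^ 2 + (X 3) ^ 3), ?_⟩
          rw [← map_mul, ← map_pow, ← map_mul]
          exact Ideal.Quotient.eq.mpr (Ideal.mem_span_singleton.mpr ⟨X 2, by ring⟩)
      · rw [Ideal.span_singleton_le_iff_mem]
        have h : ψ (X 2) ^ 3 =
            ψ (X 2) * ψ (X 3) * ψ (1 - X 2 ^ 2 * X 3 - X 2 ^ 2 * X 3 ^ 2) := by
          rw [← map_mul, ← map_mul, ← map_pow]
          exact Ideal.Quotient.eq.mpr (Ideal.mem_span_singleton.mpr ⟨-X 2, by ring⟩)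
        rw [h]
        exact Ideal.mul_mem_right _ _ (Ideal.subset_span
          (Set.mem_insert_iff.mpr (Or.inr (Set.mem_insert_iff.mpr (Or.inr rfl)))))
    · exact quot_nzd (primeX k 2) (notdvd_g2 k) 3
  · intro I₃ ψ
    rw [Ideal.eq_top_iff_one]
    have h : (1 : MvPolynomial (Fin 4) k ⧸ I₃) =
        ψ (X 3) * ψ (X 3 * ((X 2) ^ 3 + X 2 + 1)) := by
      rw [← map_mul, ← map_one ψ]
      exact Ideal.Quotient.eq.mpr (Ideal.mem_span_singleton.mpr ⟨1, by ring⟩)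
    rw [h]
    exact Ideal.mul_mem_right _ _ (Ideal.subset_span
      (Set.mem_insert_iff.mpr (Or.inr (Set.mem_insert_iff.mpr (Or.inr rfl)))))
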